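/- Let P be a finite bounded poset that is totally semimodular and has length at least 2. Then every ordering a_1,…,a_t of the atoms of P is a recursive atom ordering. -/

import Mathlib

/-- `IsRAO x y l` : `l` is a recursive atom ordering of the (bounded) interval
`[x,y]`.  If the interval has length 1 (i.e. `y` covers `x`), its unique atom
ordering `[y]` qualifies.  If the length is `> 1`, the list `l` must enumerate
the atoms of `[x,y]` (without repetition) so that
(i) each `[l_j, y]` admits a recursive atom ordering in which the atoms of
`[l_j, y]` lying above some earlier atom `l_i` (`i < j`) come first, and
(ii) for `i < j`, if `l_i, l_j < w` (with `w` in the interval) then there are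
`k < j` and an atom `z` of `[l_j, y]` with `l_k < z ≤ w`. -/
inductive IsRAO {α : Type*} [PartialOrder α] : α → α → List α → Prop where
  | single (x y : α) (h : x ⋖ y) : IsRAO x y [y]
  | step (x y : α) (l : List α) (hxy : x < y) (hcov : ¬ x ⋖ y)
      (hnd : l.Nodup)
      (hatoms : ∀ a : α, (x ⋖ a ∧ a ≤ y) ↔ a ∈ l)
      (m₁ m₂ : ∀ j : ℕ, j < l.length → List α)
      (hrec : ∀ (j : ℕ) (hj : j < l.length),
        IsRAO (l.get ⟨j, hj⟩) y (m₁ j hj ++ m₂ j hj))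
      (hfirst : ∀ (j : ℕ) (hj : j < l.length), ∀ z ∈ m₁ j hj,
        ∃ a ∈ l.take j, a ≤ z)
      (hsecond : ∀ (j : ℕ) (hj : j < l.length), ∀ z ∈ m₂ j hj,
        ¬ ∃ a ∈ l.take j, a ≤ z)
      (hii : ∀ (j : ℕ) (hj : j < l.length), ∀ a ∈ l.take j, ∀ w : α, w ≤ y →
        a < w → l.get ⟨j, hj⟩ < w →
        ∃ b ∈ l.take j, ∃ z : α, l.get ⟨j, hj⟩ ⋖ z ∧ z ≤ w ∧ b < z) :
      IsRAO x y l

/-- A poset is totally semimodular if every closed interval is semimodular: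
whenever `u ≠ v` both cover `w` within an interval (bounded above by `t`),
some element of the interval covers both `u` and `v`. -/
def TotallySemimodular (α : Type*) [PartialOrder α] : Prop :=
  ∀ w u v t : α, w ⋖ u → w ⋖ v → u ≠ v → u ≤ t → v ≤ t →
    ∃ z : α, u ⋖ z ∧ v ⋖ z ∧ z ≤ t

open Classical in
lemma isRAO_main {α : Type*} [PartialOrder α] [Fintype α]
    (hsm : TotallySemimodular α) :
    ∀ (n : ℕ) (x y : α),
      (Finset.univ.filter (fun z => x ≤ z ∧ z ≤ y)).card ≤ n →
      x < y → ∀ l : List α, l.Nodup →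
      (∀ a : α, (x ⋖ a ∧ a ≤ y) ↔ a ∈ l) → IsRAO x y l := by
  intro n
  induction n with
  | zero =>
    intro x y hc hxy l _ _
    exfalso
    have : x ∈ Finset.univ.filter (fun z => x ≤ z ∧ z ≤ y) := by
      simp [le_of_lt hxy]
    have := Finset.card_pos.2 ⟨x, this⟩
    omega
  | succ n ih =>
    intro x y hc hxy l hnd hatoms
    by_cases hcov : x ⋖ y
    · -- l = [y]
      have hy : y ∈ l := (hatoms y).mp ⟨hcov, le_rfl⟩
      have hall : ∀ a ∈ l, a = y := by
        intro a ha
        obtain ⟨hxa, hay⟩ := (hatoms a).mpr ha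
        rcases lt_or_eq_of_le hay with h | h
        · exact absurd h (hcov.2 hxa.1)
        · exact h
      have : l = [y] := by
        cases l with
        | nil => simp at hy
        | cons b t =>
          have hb : b = y := hall b (List.mem_cons_self)
          have ht : t = [] := by
            rw [List.eq_nil_iff_forall_not_mem]
            intro c hc'
            have : c = y := hall c (List.mem_cons_of_mem _ hc')
            subst this hb
            exact (List.nodup_cons.1 hnd).1 hc'
          rw [hb, ht]
      rw [this]
      exact IsRAO.single x y hcov
    · refine IsRAO.step x y l hxy hcov hnd hatoms
        (fun j hj => (Finset.univ.filter fun z =>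
          ((l.get ⟨j, hj⟩ ⋖ z ∧ z ≤ y) ∧ ∃ b ∈ l.take j, b ≤ z)).toList)
        (fun j hj => (Finset.univ.filter fun z =>
          ((l.get ⟨j, hj⟩ ⋖ z ∧ z ≤ y) ∧ ¬ ∃ b ∈ l.take j, b ≤ z)).toList)
        ?_ ?_ ?_ ?_
      · intro j hj
        set a := l.get ⟨j, hj⟩ with ha
        have hal : a ∈ l := by rw [ha]; exact List.get_mem l ⟨j, hj⟩
        obtain ⟨hxa, hay⟩ := (hatoms a).mpr hal
        have hay' : a < y := by
          rcases lt_or_eq_of_le hay with h | h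
          · exact h
          · exact absurd (h ▸ hxa) hcov
        -- card bound
        have hsub : Finset.univ.filter (fun z => a ≤ z ∧ z ≤ y) ⊂
            Finset.univ.filter (fun z => x ≤ z ∧ z ≤ y) := by
          constructor
          · intro z hz
            simp only [Finset.mem_filter, Finset.mem_univ, true_and] at hz ⊢
            exact ⟨le_of_lt (lt_of_lt_of_le hxa.1 hz.1), hz.2⟩
          · intro hcontra
            have hx : x ∈ Finset.univ.filter (fun z => x ≤ z ∧ z ≤ y) := by
              simp [le_of_lt hxy]
            have := hcontra hx
            simp only [Finset.mem_filter, Finset.mem_univ, true_and] at this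
            exact absurd this.1 (not_le_of_gt hxa.1)
        have hcard : (Finset.univ.filter (fun z => a ≤ z ∧ z ≤ y)).card ≤ n := by
          have := Finset.card_lt_card hsub
          omega
        refine ih a y hcard hay' _ ?_ ?_
        · refine List.Nodup.append (Finset.nodup_toList _) (Finset.nodup_toList _) ?_
          intro z hz1 hz2
          rw [Finset.mem_toList, Finset.mem_filter] at hz1 hz2
          exact hz2.2.2 hz1.2.2
        · intro b
          simp only [List.mem_append, Finset.mem_toList, Finset.mem_filter,
            Finset.mem_univ, true_and]
          constructor
          · intro h
            by_cases hp : ∃ b' ∈ l.take j, b' ≤ b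
            · exact Or.inl ⟨h, hp⟩
            · exact Or.inr ⟨h, hp⟩
          · rintro (⟨h, -⟩ | ⟨h, -⟩) <;> exact h
      · intro j hj z hz
        rw [Finset.mem_toList, Finset.mem_filter] at hz
        exact hz.2.2
      · intro j hj z hz
        rw [Finset.mem_toList, Finset.mem_filter] at hz
        exact hz.2.2
      · intro j hj b hb w hwy hbw haw
        set a := l.get ⟨j, hj⟩ with ha
        have hal : a ∈ l := by rw [ha]; exact List.get_mem l ⟨j, hj⟩
        have hxa : x ⋖ a := ((hatoms a).mpr hal).1
        have hbl : b ∈ l := List.mem_of_mem_take hb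
        have hxb : x ⋖ b := ((hatoms b).mpr hbl).1
        have hab : a ≠ b := by
          obtain ⟨i, hi, hib⟩ := List.mem_take_iff_getElem.1 hb
          have hij : i < j := lt_of_lt_of_le hi (min_le_left _ _)
          intro h
          have hil : i < l.length := lt_trans hij hj
          have heq : l[i] = l[j] := by
            rw [hib, ← h]
            simp [ha]
          have := (List.Nodup.getElem_inj_iff hnd).1 heq
          omega
        obtain ⟨z, haz, hbz, hzw⟩ := hsm x a b w hxa hxb hab (le_of_lt haw) (le_of_lt hbw)
        exact ⟨b, hb, z, haz, hzw, hbz.1⟩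

/-- In a finite bounded totally semimodular poset of length at least 2, every
ordering of the atoms is a recursive atom ordering. -/
theorem stmt_12 {α : Type*} [PartialOrder α] [BoundedOrder α] [Fintype α]
    (hsm : TotallySemimodular α) (hlen : ∃ z : α, ⊥ < z ∧ z < ⊤)
    (l : List α) (hnd : l.Nodup) (hatoms : ∀ a : α, (⊥ ⋖ a) ↔ a ∈ l) :
    IsRAO (⊥ : α) ⊤ l := by
  classical
  obtain ⟨z, hz1, hz2⟩ := hlen
  exact isRAO_main hsm (Finset.univ.filter (fun w => (⊥ : α) ≤ w ∧ w ≤ ⊤)).card ⊥ ⊤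
    le_rfl (lt_trans hz1 hz2) l hnd (fun a => by simpa using hatoms a)
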